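/- Fix d ≥ 1, α ≥ 0, ε > 0, C < ∞ and ω : ℕ → (0,∞) with ω(n) → ∞ and ω(n) = o(n^{1/2}). For each n, let X_0^{(n)} ≥ X_1^{(n)} ≥ … ≥ X_n^{(n)} ≥ 0 be random variables and V_0^{(n)},…,V_n^{(n)} random vectors in ℝ^d with ‖V_j^{(n)}‖ ≤ α X_j^{(n)} almost surely for all j. Assume (1) P( X_0^{(n)} > ε n and Σ_{j=1}^n X_j^{(n)} ≤ C n ) → 1, and (2) P( X_1^{(n)} ≤ ω(n) ) → 1. Let E_0, …, E_n be i.i.d. rate-1 exponential random variables independent of ( (X_j^{(n)}), (V_j^{(n)}) ) and set ξ_l^{(n)} = E_l / X_l^{(n)} (with ξ_l^{(n)} = ∞ if X_l^{(n)} = 0), so that conditionally given the X's the ξ_l^{(n)} are independent exponentials with rates X_l^{(n)}. Then n^{1/2} Σ_{l ≥ 1 : ξ_l^{(n)} < ξ_0^{(n)}} n^{-1} V_l^{(n)} → 0 in probability and n^{1/2} ξ_0^{(n)} → 0 in probability. -/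

import Mathlib

open MeasureTheory ProbabilityTheory Filter
open scoped Classical ENNReal

section Prelim
open Set Real

lemma expM_apply (s : Set ℝ) (hs : MeasurableSet s) :
    expMeasure 1 s = ∫⁻ x in s, exponentialPDF 1 x := by
  rw [expMeasure, gammaMeasure, withDensity_apply _ hs]
  rfl

lemma expM_Iio_zero : expMeasure 1 (Iio 0) = 0 := by
  rw [expM_apply _ measurableSet_Iio]
  exact lintegral_exponentialPDF_of_nonpos le_rfl

lemma expM_Iio_le (s : ℝ) : expMeasure 1 (Iio s) ≤ ENNReal.ofReal s := by
  rcases le_or_gt s 0 with h | h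
  · have : expMeasure 1 (Iio s) = 0 := by
      rw [expM_apply _ measurableSet_Iio]
      exact lintegral_exponentialPDF_of_nonpos h
    simp [this]
  · calc expMeasure 1 (Iio s) ≤ expMeasure 1 (Iic s) := measure_mono Iio_subset_Iic_self
      _ = ENNReal.ofReal (1 - Real.exp (-(1 * s))) := by
          rw [expM_apply _ measurableSet_Iic, lintegral_exponentialPDF_eq_antiDeriv one_pos,
            if_pos h.le]
      _ ≤ ENNReal.ofReal s := by
          apply ENNReal.ofReal_le_ofReal
          nlinarith [Real.add_one_le_exp (-(1*s)), Real.exp_pos (-(1*s))]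

lemma expM_mean : ∫⁻ x, ENNReal.ofReal x ∂(expMeasure 1) = 1 := by
  rw [expMeasure, gammaMeasure,
    lintegral_withDensity_eq_lintegral_mul _
      (show Measurable (gammaPDF 1 1) from (measurable_gammaPDFReal 1 1).ennreal_ofReal)
      (by fun_prop)]
  have h1 : ∀ x : ℝ, gammaPDF 1 1 x * ENNReal.ofReal x
      = Set.indicator (Ioi 0) (fun x => ENNReal.ofReal (Real.exp (-x) * x)) x := by
    intro x
    rcases le_or_gt x 0 with h | h
    · rcases lt_or_eq_of_le h with h' | h'
      · rw [gammaPDF_of_neg h', Set.indicator_of_notMem (by simp [h.not_gt]), zero_mul]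
      · simp [← h', Set.indicator_of_notMem]
    · rw [Set.indicator_of_mem (show x ∈ Ioi 0 from h), gammaPDF_of_nonneg h.le]
      rw [← ENNReal.ofReal_mul (by positivity)]
      congr 1
      rw [Real.Gamma_one]
      norm_num
  simp only [Pi.mul_apply]
  simp_rw [h1]
  rw [lintegral_indicator measurableSet_Ioi]
  have hint : IntegrableOn (fun x => Real.exp (-x) * x) (Ioi 0) := by
    have := Real.GammaIntegral_convergent (s := 2) (by norm_num)
    simp only [show (2:ℝ)-1 = 1 from by norm_num, Real.rpow_one] at this
    exact this
  rw [← ofReal_integral_eq_lintegral_ofReal hint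
    (Filter.eventually_of_mem (self_mem_ae_restrict measurableSet_Ioi)
      (fun x hx => mul_nonneg (Real.exp_pos _).le (le_of_lt hx)))]
  have h2 : ∫ x in Ioi 0, Real.exp (-x) * x = Real.Gamma 2 := by
    rw [Real.Gamma_eq_integral (by norm_num : (0:ℝ) < 2)]
    simp [show (2:ℝ)-1 = 1 from by norm_num]
  have h3 : Real.Gamma 2 = 1 := by
    rw [show (2:ℝ) = (1:ℕ)+1 from by norm_num, Real.Gamma_nat_eq_factorial]
    norm_num
  rw [h2, h3]
  norm_num

lemma expM_Ici_le {t : ℝ} (ht : 0 < t) : expMeasure 1 (Ici t) ≤ ENNReal.ofReal t⁻¹ := by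
  have : IsProbabilityMeasure (expMeasure 1) := isProbabilityMeasure_expMeasure one_pos
  have h := meas_ge_le_lintegral_div (μ := expMeasure 1)
    (f := fun x => ENNReal.ofReal x) (by fun_prop)
    (ε := ENNReal.ofReal t) (by simp [ht]) (by simp)
  rw [expM_mean] at h
  rw [ENNReal.ofReal_inv_of_pos ht]
  refine le_trans (measure_mono ?_) (h.trans ?_)
  · exact fun x hx => ENNReal.ofReal_le_ofReal hx
  · rw [ENNReal.div_eq_inv_mul, mul_one]

lemma expM_prod_le {c : ℝ} (hc : 0 ≤ c) :
    ((expMeasure 1).prod (expMeasure 1)) {p : ℝ × ℝ | p.2 < c * p.1} ≤ ENNReal.ofReal c := by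
  have : IsProbabilityMeasure (expMeasure 1) := isProbabilityMeasure_expMeasure one_pos
  have hms : MeasurableSet {p : ℝ × ℝ | p.2 < c * p.1} :=
    measurableSet_lt measurable_snd (measurable_fst.const_mul c)
  rw [Measure.prod_apply hms]
  have h1 : ∀ x : ℝ, expMeasure 1 (Prod.mk x ⁻¹' {p : ℝ × ℝ | p.2 < c * p.1})
      ≤ ENNReal.ofReal c * ENNReal.ofReal x := by
    intro x
    have : Prod.mk x ⁻¹' {p : ℝ × ℝ | p.2 < c * p.1} = Iio (c * x) := rfl
    rw [this]
    refine (expM_Iio_le _).trans ?_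
    rw [← ENNReal.ofReal_mul hc]
  calc ∫⁻ x, expMeasure 1 (Prod.mk x ⁻¹' {p : ℝ × ℝ | p.2 < c * p.1}) ∂(expMeasure 1)
      ≤ ∫⁻ x, ENNReal.ofReal c * ENNReal.ofReal x ∂(expMeasure 1) :=
        lintegral_mono h1
    _ = ENNReal.ofReal c * ∫⁻ x, ENNReal.ofReal x ∂(expMeasure 1) :=
        lintegral_const_mul _ (by fun_prop)
    _ = ENNReal.ofReal c := by rw [expM_mean, mul_one]

end Prelim

/-- The event `ξ_l < ξ_0`, where `ξ_l = E_l / X_l` (with `ξ_l = ∞` when `X_l = 0`). -/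
def xiLt {Ω : Type*} (X E : Ω → ℝ) (X₀ E₀ : Ω → ℝ) (ω : Ω) : Prop :=
  0 < X ω ∧ (X₀ ω = 0 ∨ E ω / X ω < E₀ ω / X₀ ω)

theorem small_components_contribution_negligible {d : ℕ}
    (α : ℝ) (hα : 0 ≤ α) (ε C : ℝ) (hε : 0 < ε)
    (w : ℕ → ℝ) (hwpos : ∀ n, 0 < w n)
    (hwtop : Tendsto w atTop atTop)
    (hwlittle : w =o[atTop] fun n : ℕ => Real.sqrt n)
    (Ω : ℕ → Type) [∀ n, MeasurableSpace (Ω n)]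
    (P : ∀ n, Measure (Ω n)) [∀ n, IsProbabilityMeasure (P n)]
    (X : ∀ n, Fin (n + 1) → Ω n → ℝ)
    (V : ∀ n, Fin (n + 1) → Ω n → (Fin d → ℝ))
    (hXmeas : ∀ n l, Measurable (X n l)) (hVmeas : ∀ n l, Measurable (V n l))
    (hXnonneg : ∀ n l ω, 0 ≤ X n l ω)
    (hXmono : ∀ n (l l' : Fin (n + 1)), l ≤ l' → ∀ ω, X n l' ω ≤ X n l ω)
    (hVX : ∀ n l, ∀ᵐ ω ∂(P n), ‖V n l ω‖ ≤ α * X n l ω)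
    -- hypothesis (1): `P(X₀ > ε n and ∑_{j=1}^n X_j ≤ C n) → 1`
    (h1 : Tendsto (fun n => P n {ω | ε * n < X n 0 ω ∧
        (∑ l ∈ Finset.univ.filter (fun l : Fin (n + 1) => l ≠ 0), X n l ω) ≤ C * n})
      atTop (nhds 1))
    -- hypothesis (2): `P(X₁ ≤ ω(n)) → 1`
    (h2 : Tendsto (fun n => P n {ω | X n 1 ω ≤ w n}) atTop (nhds 1))
    -- `E`'s are i.i.d. rate-1 exponentials, independent of the pair `((X_j), (V_j))`
    (E : ∀ n, Fin (n + 1) → Ω n → ℝ)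
    (hEmeas : ∀ n l, Measurable (E n l))
    (hEindep : ∀ n, iIndepFun (E n) (P n))
    (hElaw : ∀ n l, Measure.map (E n l) (P n) = expMeasure 1)
    (hEX : ∀ n, IndepFun (fun ω (l : Fin (n + 1)) => (X n l ω, V n l ω))
        (fun ω (l : Fin (n + 1)) => E n l ω) (P n)) :
    -- `√n ∑_{l ≥ 1 : ξ_l < ξ_0} n⁻¹ V_l → 0` in probability, and `√n ξ_0 → 0` in probability
    (∀ δ : ℝ, 0 < δ → Tendsto (fun n => P n {ω | δ ≤
        ‖Real.sqrt n • ∑ l ∈ Finset.univ.filter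
            (fun l : Fin (n + 1) => l ≠ 0 ∧ xiLt (X n l) (E n l) (X n 0) (E n 0) ω),
          (n : ℝ)⁻¹ • V n l ω‖}) atTop (nhds 0)) ∧
    (∀ δ : ℝ, 0 < δ → Tendsto (fun n => P n {ω | X n 0 ω = 0 ∨
        δ ≤ Real.sqrt n * (E n 0 ω / X n 0 ω)}) atTop (nhds 0)) := by
    -- notation
  set A : ∀ n, Set (Ω n) := fun n => {ω | ε * n < X n 0 ω ∧
      (∑ l ∈ Finset.univ.filter (fun l : Fin (n + 1) => l ≠ 0), X n l ω) ≤ C * n} with hA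
  have hAmeas : ∀ n, MeasurableSet (A n) := by
    intro n
    exact (measurableSet_lt measurable_const (hXmeas n 0)).inter
      (measurableSet_le (Finset.measurable_sum _ (fun l _ => hXmeas n l)) measurable_const)
  have hAc : Tendsto (fun n => P n (A n)ᶜ) atTop (nhds 0) := by
    have heq : ∀ n, P n (A n)ᶜ = 1 - P n (A n) := fun n => by
      rw [measure_compl (hAmeas n) (measure_ne_top _ _), measure_univ]
    have := ENNReal.Tendsto.sub (tendsto_const_nhds (x := (1:ℝ≥0∞)) (f := atTop)) h1
      (Or.inl (by simp))
    simp only [tsub_self] at this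
    exact (Tendsto.congr (fun n => (heq n).symm) this)
  have htail : ∀ n (t : ℝ), P n {ω | t ≤ E n 0 ω} = expMeasure 1 (Set.Ici t) := by
    intro n t
    rw [← hElaw n 0, Measure.map_apply (hEmeas n 0) measurableSet_Ici]
    rfl
  have hE0neg : ∀ n, P n {ω | E n 0 ω < 0} = 0 := by
    intro n
    have : {ω | E n 0 ω < 0} = E n 0 ⁻¹' (Set.Iio 0) := rfl
    rw [this, ← Measure.map_apply (hEmeas n 0) measurableSet_Iio, hElaw n 0, expM_Iio_zero]
  have hsqrt_top : Tendsto (fun n : ℕ => Real.sqrt n) atTop atTop := by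
    rw [tendsto_atTop_atTop]
    intro b
    refine ⟨⌈b^2⌉₊, fun n hn => ?_⟩
    have hb : (b^2 : ℝ) ≤ n := le_trans (Nat.le_ceil _) (by exact_mod_cast hn)
    calc b ≤ |b| := le_abs_self b
      _ = Real.sqrt (b^2) := (Real.sqrt_sq_eq_abs b).symm
      _ ≤ Real.sqrt n := Real.sqrt_le_sqrt hb
  constructor
  · -- first statement
    intro δ hδ
    set β := α + 1 with hβdef
    have hβ : 0 < β := by simp only [hβdef]; linarith
    have hBmeas : ∀ n, MeasurableSet {ω : Ω n | X n 1 ω ≤ w n} := fun n =>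
      measurableSet_le (hXmeas n 1) measurable_const
    have hBc : Tendsto (fun n => P n {ω : Ω n | X n 1 ω ≤ w n}ᶜ) atTop (nhds 0) := by
      have heq : ∀ n, P n {ω : Ω n | X n 1 ω ≤ w n}ᶜ
          = 1 - P n {ω : Ω n | X n 1 ω ≤ w n} := fun n => by
        rw [measure_compl (hBmeas n) (measure_ne_top _ _), measure_univ]
      have := ENNReal.Tendsto.sub (tendsto_const_nhds (x := (1:ℝ≥0∞)) (f := atTop)) h2
        (Or.inl (by simp))
      simp only [tsub_self] at this
      exact Tendsto.congr (fun n => (heq n).symm) this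
    set c : ℕ → ℝ := fun n => w n / (ε * n) with hcdef
    have hc_nonneg : ∀ n, 0 ≤ c n := fun n =>
      div_nonneg (hwpos n).le (by positivity)
    set K : ℕ → ℝ := fun n => δ * Real.sqrt n / β with hKdef
    set S : ∀ n, Fin (n+1) → Set (Ω n) := fun n l => {ω | E n l ω < c n * E n 0 ω} with hSdef
    have hSmeas : ∀ n l, MeasurableSet (S n l) := fun n l =>
      measurableSet_lt (hEmeas n l) ((hEmeas n 0).const_mul _)
    set f : ∀ n, Fin (n+1) → Ω n → ℝ≥0∞ := fun n l ω =>
      ENNReal.ofReal (X n l ω) * Set.indicator (A n) 1 ω with hfdef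
    set g : ∀ n, Fin (n+1) → Ω n → ℝ≥0∞ := fun n l ω =>
      Set.indicator (S n l) 1 ω with hgdef
    have hfmeas : ∀ n l, Measurable (f n l) := fun n l =>
      ((hXmeas n l).ennreal_ofReal).mul (measurable_one.indicator (hAmeas n))
    have hgmeas : ∀ n l, Measurable (g n l) := fun n l =>
      measurable_one.indicator (hSmeas n l)
    set F : ∀ n, Ω n → ℝ≥0∞ := fun n ω =>
      ∑ l ∈ Finset.univ.filter (fun l : Fin (n+1) => l ≠ 0), f n l ω * g n l ω with hFdef
    have hFmeas : ∀ n, Measurable (F n) := fun n =>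
      Finset.measurable_sum _ (fun l _ => (hfmeas n l).mul (hgmeas n l))
    -- probability of the E-event
    have hPS : ∀ n (l : Fin (n+1)), l ≠ 0 → P n (S n l) ≤ ENNReal.ofReal (c n) := by
      intro n l hl
      have hpairmeas : Measurable (fun ω => (E n 0 ω, E n l ω)) :=
        (hEmeas n 0).prodMk (hEmeas n l)
      have hmsp : MeasurableSet {p : ℝ × ℝ | p.2 < c n * p.1} :=
        measurableSet_lt measurable_snd (measurable_fst.const_mul _)
      have hmapeq : (P n).map (fun ω => (E n 0 ω, E n l ω))
          = (expMeasure 1).prod (expMeasure 1) := by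
        have hind : IndepFun (E n 0) (E n l) (P n) := (hEindep n).indepFun (Ne.symm hl)
        have := (indepFun_iff_map_prod_eq_prod_map_map (hEmeas n 0).aemeasurable
          (hEmeas n l).aemeasurable).mp hind
        rw [this, hElaw, hElaw]
      have : S n l = (fun ω => (E n 0 ω, E n l ω)) ⁻¹' {p : ℝ × ℝ | p.2 < c n * p.1} := rfl
      rw [this, ← Measure.map_apply hpairmeas hmsp, hmapeq]
      exact expM_prod_le (hc_nonneg n)
    -- independence of f and g
    have hIndep : ∀ n (l : Fin (n+1)), IndepFun (f n l) (g n l) (P n) := by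
      intro n l
      set φ : (Fin (n+1) → ℝ × (Fin d → ℝ)) → ℝ≥0∞ := fun v =>
        ENNReal.ofReal (v l).1 * Set.indicator {v' : Fin (n+1) → ℝ × (Fin d → ℝ) |
          ε * n < (v' 0).1 ∧ (∑ j ∈ Finset.univ.filter (fun j : Fin (n+1) => j ≠ 0),
            (v' j).1) ≤ C * n} 1 v with hφdef
      set ψ : (Fin (n+1) → ℝ) → ℝ≥0∞ := fun e =>
        Set.indicator {e' : Fin (n+1) → ℝ | e' l < c n * e' 0} 1 e with hψdef
      have hm : ∀ j : Fin (n+1), Measurable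
          (fun v' : Fin (n+1) → ℝ × (Fin d → ℝ) => (v' j).1) :=
        fun j => measurable_fst.comp (measurable_pi_apply j)
      have hA'meas : MeasurableSet {v' : Fin (n+1) → ℝ × (Fin d → ℝ) |
          ε * n < (v' 0).1 ∧ (∑ j ∈ Finset.univ.filter (fun j : Fin (n+1) => j ≠ 0),
            (v' j).1) ≤ C * n} :=
        (measurableSet_lt measurable_const (hm 0)).inter
          (measurableSet_le (Finset.measurable_sum _ (fun j _ => hm j)) measurable_const)
      have hφmeas : Measurable φ :=
        ((hm l).ennreal_ofReal).mul (measurable_one.indicator hA'meas)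
      have hψmeas : Measurable ψ :=
        measurable_one.indicator (measurableSet_lt (measurable_pi_apply l)
          ((measurable_pi_apply 0).const_mul _))
      have h := (hEX n).comp hφmeas hψmeas
      have heq1 : φ ∘ (fun ω (l : Fin (n + 1)) => (X n l ω, V n l ω)) = f n l := by
        funext ω
        by_cases hωA : ω ∈ A n
        · have h1' : (fun j : Fin (n+1) => (X n j ω, V n j ω)) ∈
              {v' : Fin (n+1) → ℝ × (Fin d → ℝ) | ε * n < (v' 0).1 ∧
                (∑ j ∈ Finset.univ.filter (fun j : Fin (n+1) => j ≠ 0), (v' j).1) ≤ C * n} :=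
            hωA
          simp [hφdef, hfdef, Set.indicator_of_mem h1', Set.indicator_of_mem hωA]
        · have h1' : (fun j : Fin (n+1) => (X n j ω, V n j ω)) ∉
              {v' : Fin (n+1) → ℝ × (Fin d → ℝ) | ε * n < (v' 0).1 ∧
                (∑ j ∈ Finset.univ.filter (fun j : Fin (n+1) => j ≠ 0), (v' j).1) ≤ C * n} :=
            fun h => hωA h
          simp [hφdef, hfdef, Set.indicator_of_notMem h1', Set.indicator_of_notMem hωA]
      have heq2 : ψ ∘ (fun ω (l : Fin (n + 1)) => E n l ω) = g n l := by
        funext ω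
        by_cases hωS : ω ∈ S n l
        · have h1' : (fun j : Fin (n+1) => E n j ω) ∈
              {e' : Fin (n+1) → ℝ | e' l < c n * e' 0} := hωS
          simp [hψdef, hgdef, Set.indicator_of_mem h1', Set.indicator_of_mem hωS]
        · have h1' : (fun j : Fin (n+1) => E n j ω) ∉
              {e' : Fin (n+1) → ℝ | e' l < c n * e' 0} := fun h => hωS h
          simp [hψdef, hgdef, Set.indicator_of_notMem h1', Set.indicator_of_notMem hωS]
      rwa [heq1, heq2] at h
    -- bound on the integral of F
    have hFint : ∀ n, ∫⁻ ω, F n ω ∂(P n)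
        ≤ ENNReal.ofReal (c n) * ENNReal.ofReal (C * n) := by
      intro n
      rw [hFdef]
      beta_reduce
      rw [lintegral_finset_sum (f := fun l ω => f n l ω * g n l ω) _
        (fun l _ => (hfmeas n l).mul (hgmeas n l))]
      have step1 : ∀ l ∈ Finset.univ.filter (fun l : Fin (n+1) => l ≠ 0),
          ∫⁻ ω, f n l ω * g n l ω ∂(P n)
            ≤ (∫⁻ ω, f n l ω ∂(P n)) * ENNReal.ofReal (c n) := by
        intro l hl
        have hmul := lintegral_mul_eq_lintegral_mul_lintegral_of_indepFun (hfmeas n l)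
          (hgmeas n l) (hIndep n l)
        have hgint : ∫⁻ ω, g n l ω ∂(P n) = P n (S n l) := by
          simp only [hgdef]
          exact lintegral_indicator_one (hSmeas n l)
        calc ∫⁻ ω, f n l ω * g n l ω ∂(P n)
            = ∫⁻ ω, (f n l * g n l) ω ∂(P n) := rfl
          _ = (∫⁻ ω, f n l ω ∂(P n)) * ∫⁻ ω, g n l ω ∂(P n) := hmul
          _ = (∫⁻ ω, f n l ω ∂(P n)) * P n (S n l) := by rw [hgint]
          _ ≤ (∫⁻ ω, f n l ω ∂(P n)) * ENNReal.ofReal (c n) :=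
              mul_le_mul_right (hPS n l (Finset.mem_filter.mp hl).2) _
      refine le_trans (Finset.sum_le_sum step1) ?_
      rw [← Finset.sum_mul]
      rw [mul_comm]
      apply mul_le_mul_right
      rw [← lintegral_finset_sum _ (fun l _ => hfmeas n l)]
      have hpt : ∀ ω, (∑ l ∈ Finset.univ.filter (fun l : Fin (n+1) => l ≠ 0), f n l ω)
          ≤ ENNReal.ofReal (C * n) := by
        intro ω
        by_cases hωA : ω ∈ A n
        · simp only [hfdef, Set.indicator_of_mem hωA, Pi.one_apply, mul_one]
          rw [← ENNReal.ofReal_sum_of_nonneg (fun l _ => hXnonneg n l ω)]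
          exact ENNReal.ofReal_le_ofReal hωA.2
        · simp only [hfdef, Set.indicator_of_notMem hωA, mul_zero]
          simp
      refine le_trans (lintegral_mono hpt) ?_
      rw [lintegral_const, measure_univ, mul_one]
    -- the bad event
    have hBadnull : ∀ n, P n ({ω : Ω n | ∃ l, ¬ (‖V n l ω‖ ≤ β * X n l ω)}
        ∪ {ω : Ω n | E n 0 ω < 0}) = 0 := by
      intro n
      apply measure_union_null
      · refine measure_mono_null (fun ω hω => ?_)
          (measure_iUnion_null (s := fun l : Fin (n+1) =>
            {ω : Ω n | ¬ (‖V n l ω‖ ≤ β * X n l ω)}) (fun l => ?_))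
        · obtain ⟨l, hl⟩ := hω
          exact Set.mem_iUnion.2 ⟨l, hl⟩
        · have h' : ∀ᵐ ω ∂(P n), ‖V n l ω‖ ≤ β * X n l ω := by
            filter_upwards [hVX n l] with ω hω
            have := hXnonneg n l ω
            nlinarith [hω]
          exact ae_iff.mp h'
      · exact hE0neg n
    -- closed form for the Markov bound
    set r : ℕ → ℝ := fun n => c n * (C * n) / K n with hrdef
    have hrclosed : ∀ n : ℕ, 1 ≤ n → r n = C * β / (δ * ε) * (w n / Real.sqrt n) := by
      intro n hn
      have hn0 : (n:ℝ) ≠ 0 := by positivity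
      have hs0 : Real.sqrt n ≠ 0 :=
        ne_of_gt (Real.sqrt_pos.2 (by exact_mod_cast Nat.pos_of_ne_zero (by omega)))
      simp only [hrdef, hcdef, hKdef]
      field_simp
    have hrtend : Tendsto (fun n => ENNReal.ofReal (r n)) atTop (nhds 0) := by
      have h0 : Tendsto (fun n : ℕ => C * β / (δ * ε) * (w n / Real.sqrt n)) atTop (nhds 0) := by
        have := hwlittle.tendsto_div_nhds_zero
        have := this.const_mul (C * β / (δ * ε))
        simpa using this
      have hreal : Tendsto r atTop (nhds 0) := by
        refine h0.congr' ?_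
        filter_upwards [eventually_ge_atTop 1] with n hn
        exact (hrclosed n hn).symm
      simpa using ENNReal.tendsto_ofReal hreal
    -- main inclusion and measure bound
    have hmono : ∀ᶠ n : ℕ in atTop, P n {ω | δ ≤
        ‖Real.sqrt n • ∑ l ∈ Finset.univ.filter
            (fun l : Fin (n + 1) => l ≠ 0 ∧ xiLt (X n l) (E n l) (X n 0) (E n 0) ω),
          (n : ℝ)⁻¹ • V n l ω‖}
        ≤ P n (A n)ᶜ + (P n {ω : Ω n | X n 1 ω ≤ w n}ᶜ + ENNReal.ofReal (r n)) := by
      filter_upwards [eventually_ge_atTop 1] with n hn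
      have hn1 : (1:ℝ) ≤ n := by exact_mod_cast hn
      have hnpos : (0:ℝ) < n := by linarith
      have hsqpos : (0:ℝ) < Real.sqrt n := Real.sqrt_pos.2 hnpos
      have hsq : Real.sqrt n * Real.sqrt n = n := Real.mul_self_sqrt hnpos.le
      have hKpos : 0 < K n := by
        simp only [hKdef]
        positivity
      have hsub : {ω | δ ≤
          ‖Real.sqrt n • ∑ l ∈ Finset.univ.filter
              (fun l : Fin (n + 1) => l ≠ 0 ∧ xiLt (X n l) (E n l) (X n 0) (E n 0) ω),
            (n : ℝ)⁻¹ • V n l ω‖}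
          ⊆ (A n)ᶜ ∪ ({ω : Ω n | X n 1 ω ≤ w n}ᶜ ∪
            (({ω : Ω n | ∃ l, ¬ (‖V n l ω‖ ≤ β * X n l ω)} ∪ {ω : Ω n | E n 0 ω < 0}) ∪
              {ω : Ω n | ENNReal.ofReal (K n) ≤ F n ω})) := by
        intro ω hω
        by_cases hωA : ω ∈ A n
        swap
        · exact Or.inl hωA
        by_cases hωB : ω ∈ {ω : Ω n | X n 1 ω ≤ w n}
        swap
        · exact Or.inr (Or.inl hωB)
        by_cases hωV : ∀ l, ‖V n l ω‖ ≤ β * X n l ω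
        swap
        · push_neg at hωV
          obtain ⟨l, hl⟩ := hωV
          exact Or.inr (Or.inr (Or.inl (Or.inl ⟨l, by simpa using hl.not_ge⟩)))
        by_cases hωE : E n 0 ω < 0
        · exact Or.inr (Or.inr (Or.inl (Or.inr hωE)))
        push_neg at hωE
        refine Or.inr (Or.inr (Or.inr ?_))
        -- core computation
        set T := Finset.univ.filter
          (fun l : Fin (n + 1) => l ≠ 0 ∧ xiLt (X n l) (E n l) (X n 0) (E n 0) ω) with hTdef
        have hX0 : ε * n < X n 0 ω := hωA.1
        have hX0pos : 0 < X n 0 ω := lt_of_le_of_lt (by positivity) hX0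
        -- every l in T lies in the E-event
        have hTmem : ∀ l ∈ T, l ≠ 0 ∧ ω ∈ S n l := by
          intro l hl
          obtain ⟨-, hlne, hxi⟩ := Finset.mem_filter.mp hl
          refine ⟨hlne, ?_⟩
          obtain ⟨hXlpos, hor⟩ := hxi
          have hlt : E n l ω / X n l ω < E n 0 ω / X n 0 ω := by
            rcases hor with h0 | h0
            · exact absurd h0 (ne_of_gt hX0pos)
            · exact h0
          have h1l : (1 : Fin (n+1)) ≤ l := by
            have hv : (1 : Fin (n+1)).val = 1 := by
              simp [Fin.val_one', Nat.mod_eq_of_lt (by omega : 1 < n+1)]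
            have hl0 : l.val ≠ 0 := fun h => hlne (Fin.ext (by simpa using h))
            rw [Fin.le_def, hv]
            omega
          have hXl1 : X n l ω ≤ w n := le_trans (hXmono n 1 l h1l ω) hωB
          have hEl : E n l ω < (E n 0 ω / X n 0 ω) * X n l ω :=
            (div_lt_iff₀ hXlpos).mp hlt
          show E n l ω < c n * E n 0 ω
          have h7 : E n 0 ω * X n l ω ≤ E n 0 ω * w n :=
            mul_le_mul_of_nonneg_left hXl1 hωE
          have h8 : (E n 0 ω * X n l ω) / X n 0 ω ≤ (E n 0 ω * w n) / (ε * n) :=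
            div_le_div₀ (mul_nonneg hωE (hwpos n).le) h7 (by positivity) hX0.le
          calc E n l ω < (E n 0 ω / X n 0 ω) * X n l ω := hEl
            _ = (E n 0 ω * X n l ω) / X n 0 ω := by ring
            _ ≤ (E n 0 ω * w n) / (ε * n) := h8
            _ = c n * E n 0 ω := by simp only [hcdef]; ring
        -- norm estimate
        have hnorm2 : ‖∑ l ∈ T, (n : ℝ)⁻¹ • V n l ω‖
            ≤ ∑ l ∈ T, (n:ℝ)⁻¹ * (β * X n l ω) := by
          refine le_trans (norm_sum_le _ _) (Finset.sum_le_sum fun l hl => ?_)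
          rw [norm_smul, Real.norm_eq_abs, abs_of_nonneg (by positivity)]
          exact mul_le_mul_of_nonneg_left (hωV l) (by positivity)
        have hδchain : δ ≤ Real.sqrt n * ((n:ℝ)⁻¹ * β * (∑ l ∈ T, X n l ω)) := by
          have h1 : δ ≤ Real.sqrt n * ‖∑ l ∈ T, (n : ℝ)⁻¹ • V n l ω‖ := by
            have := hω
            rwa [Set.mem_setOf_eq, norm_smul, Real.norm_eq_abs,
              abs_of_nonneg (Real.sqrt_nonneg _)] at this
          refine le_trans h1 (mul_le_mul_of_nonneg_left ?_ (Real.sqrt_nonneg _))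
          refine le_trans hnorm2 (le_of_eq ?_)
          rw [Finset.mul_sum]
          exact Finset.sum_congr rfl (fun l _ => by ring)
        set Ssum := ∑ l ∈ T, X n l ω with hSsumdef
        have hSsumnonneg : 0 ≤ Ssum := Finset.sum_nonneg (fun l _ => hXnonneg n l ω)
        have e1 : δ * (n:ℝ) ≤ Real.sqrt n * β * Ssum := by
          have h2 := mul_le_mul_of_nonneg_right hδchain hnpos.le
          calc δ * (n:ℝ) ≤ Real.sqrt n * ((n:ℝ)⁻¹ * β * Ssum) * n := h2
            _ = Real.sqrt n * β * Ssum * ((n:ℝ)⁻¹ * n) := by ring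
            _ = Real.sqrt n * β * Ssum := by
                rw [inv_mul_cancel₀ (ne_of_gt hnpos), mul_one]
        have e2 : δ * Real.sqrt n * Real.sqrt n ≤ (β * Ssum) * Real.sqrt n := by
          calc δ * Real.sqrt n * Real.sqrt n = δ * (Real.sqrt n * Real.sqrt n) := by ring
            _ = δ * n := by rw [hsq]
            _ ≤ Real.sqrt n * β * Ssum := e1
            _ = (β * Ssum) * Real.sqrt n := by ring
        have e3 : δ * Real.sqrt n ≤ β * Ssum := le_of_mul_le_mul_right (by linarith [e2]) hsqpos
        have hKS : K n ≤ Ssum := by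
          simp only [hKdef]
          rw [div_le_iff₀ hβ]
          linarith [e3]
        -- conclude
        show ENNReal.ofReal (K n) ≤ F n ω
        have hTsub : T ⊆ Finset.univ.filter (fun l : Fin (n+1) => l ≠ 0) := by
          intro l hl
          exact Finset.mem_filter.mpr ⟨Finset.mem_univ l, (hTmem l hl).1⟩
        calc ENNReal.ofReal (K n) ≤ ENNReal.ofReal Ssum := ENNReal.ofReal_le_ofReal hKS
          _ = ∑ l ∈ T, ENNReal.ofReal (X n l ω) := by
              rw [hSsumdef, ENNReal.ofReal_sum_of_nonneg (fun l _ => hXnonneg n l ω)]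
          _ = ∑ l ∈ T, f n l ω * g n l ω := by
              refine Finset.sum_congr rfl (fun l hl => ?_)
              simp only [hfdef, hgdef, Set.indicator_of_mem hωA,
                Set.indicator_of_mem (hTmem l hl).2, Pi.one_apply, mul_one]
          _ ≤ F n ω := Finset.sum_le_sum_of_subset_of_nonneg hTsub
              (fun l _ _ => zero_le)
      refine le_trans (measure_mono hsub) ?_
      refine le_trans (measure_union_le _ _) ?_
      apply add_le_add_right
      refine le_trans (measure_union_le _ _) ?_
      apply add_le_add_right
      refine le_trans (measure_union_le _ _) ?_
      rw [hBadnull n, zero_add]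
      -- Markov inequality
      have hK0 : ENNReal.ofReal (K n) ≠ 0 := by
        simp [ENNReal.ofReal_eq_zero, not_le, hKpos]
      have hmarkov := meas_ge_le_lintegral_div (μ := P n) (f := F n)
        (hFmeas n).aemeasurable hK0 ENNReal.ofReal_ne_top
      refine le_trans hmarkov ?_
      calc (∫⁻ ω, F n ω ∂(P n)) / ENNReal.ofReal (K n)
          ≤ (ENNReal.ofReal (c n) * ENNReal.ofReal (C * n)) / ENNReal.ofReal (K n) :=
            ENNReal.div_le_div_right (hFint n) _
        _ = ENNReal.ofReal (c n * (C * n)) / ENNReal.ofReal (K n) := by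
            rw [ENNReal.ofReal_mul (hc_nonneg n)]
        _ = ENNReal.ofReal (c n * (C * n) / K n) := by
            rw [ENNReal.ofReal_div_of_pos hKpos]
        _ = ENNReal.ofReal (r n) := rfl
    have hupper : Tendsto (fun n => P n (A n)ᶜ +
        (P n {ω : Ω n | X n 1 ω ≤ w n}ᶜ + ENNReal.ofReal (r n))) atTop (nhds 0) := by
      have := hAc.add (hBc.add hrtend)
      simpa using this
    exact tendsto_of_tendsto_of_tendsto_of_le_of_le' tendsto_const_nhds hupper
      (Eventually.of_forall (fun n => zero_le)) hmono
  · -- second statement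
    intro δ hδ
    have hmono : ∀ᶠ n : ℕ in atTop, P n {ω | X n 0 ω = 0 ∨
        δ ≤ Real.sqrt n * (E n 0 ω / X n 0 ω)}
        ≤ P n (A n)ᶜ + ENNReal.ofReal (δ * ε * Real.sqrt n)⁻¹ := by
      filter_upwards [eventually_ge_atTop 1] with n hn
      have hsub : {ω | X n 0 ω = 0 ∨ δ ≤ Real.sqrt n * (E n 0 ω / X n 0 ω)}
          ⊆ (A n)ᶜ ∪ {ω | δ * ε * Real.sqrt n ≤ E n 0 ω} := by
        intro ω hω
        by_cases hωA : ω ∈ A n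
        · right
          have hX0 : ε * n < X n 0 ω := hωA.1
          have hn1 : (1:ℝ) ≤ n := by exact_mod_cast hn
          have hX0pos : 0 < X n 0 ω := lt_of_lt_of_le (by positivity) (le_of_lt hX0)
          rcases hω with h0 | h0
          · exact absurd h0 (ne_of_gt hX0pos)
          · have hsq : Real.sqrt n * Real.sqrt n = n :=
              Real.mul_self_sqrt (by positivity)
            have hsqpos : 0 < Real.sqrt n := Real.sqrt_pos.2 (by linarith)
            have h0' : δ * X n 0 ω ≤ Real.sqrt n * E n 0 ω := by
              rw [← mul_div_assoc] at h0
              exact (le_div_iff₀ hX0pos).mp h0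
            have key2 : δ * (ε * (n:ℝ)) < δ * X n 0 ω := by
              have := mul_lt_mul_of_pos_left hX0 hδ
              linarith [this]
            have h5 : δ * ε * Real.sqrt n * Real.sqrt n ≤ Real.sqrt n * E n 0 ω := by
              calc δ * ε * Real.sqrt n * Real.sqrt n
                  = δ * (ε * (Real.sqrt n * Real.sqrt n)) := by ring
                _ = δ * (ε * (n:ℝ)) := by rw [hsq]
                _ ≤ δ * X n 0 ω := le_of_lt key2
                _ ≤ Real.sqrt n * E n 0 ω := h0'
            exact le_of_mul_le_mul_right (by linarith [h5]) hsqpos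
        · exact Or.inl hωA
      refine le_trans (measure_mono hsub) ?_
      refine le_trans (measure_union_le _ _) ?_
      gcongr
      rw [htail n _]
      have hpos : 0 < δ * ε * Real.sqrt n := by
        have : (0:ℝ) < Real.sqrt n := Real.sqrt_pos.2 (by exact_mod_cast hn)
        positivity
      exact expM_Ici_le hpos
    have hupper : Tendsto (fun n => P n (A n)ᶜ + ENNReal.ofReal (δ * ε * Real.sqrt n)⁻¹)
        atTop (nhds 0) := by
      have h2' : Tendsto (fun n : ℕ => ENNReal.ofReal (δ * ε * Real.sqrt n)⁻¹)
          atTop (nhds 0) := by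
        have : Tendsto (fun n : ℕ => (δ * ε * Real.sqrt n)⁻¹) atTop (nhds 0) := by
          apply Tendsto.inv_tendsto_atTop
          exact Tendsto.const_mul_atTop (by positivity) hsqrt_top
        simpa using (ENNReal.tendsto_ofReal this)
      simpa using hAc.add h2'
    exact tendsto_of_tendsto_of_tendsto_of_le_of_le' tendsto_const_nhds hupper
      (Eventually.of_forall (fun n => zero_le)) hmono
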